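/- For every integer k ≥ 2 and every positive integer c, one has z_k(c) = ξ_k · Σ_{t∈ℕ, t ≥ c^{1/k}} (|μ(t)|/t^{2k}) · Π_{p prime, p∣t} 1/(1 − 2p^{−k}), where ξ_k := Π_{p prime} (1 − (p^k−1)^{−2}). -/

import Mathlib

open scoped Classical BigOperators Topology
open Filter Asymptotics

/-- Real Riemann zeta: `ζ(s) = ∑ 1/n^s` (valid representation for `s > 1`). -/
noncomputable def zetaR (s : ℝ) : ℝ := ∑' n : ℕ, 1 / (n : ℝ) ^ s

/-- `q` is `k`-free: no prime `p` with `p^k ∣ q`. -/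
def KFree (k q : ℕ) : Prop := ∀ p : ℕ, p.Prime → ¬ p ^ k ∣ q

/-- Indicator (real valued) of `k`-free integers. -/
noncomputable def muk (k q : ℕ) : ℝ := if KFree k q then 1 else 0

/-- `∏_{p ∣ q} (p^k - 1)^{-2}`. -/
noncomputable def Pk (k q : ℕ) : ℝ :=
  ∏ p ∈ q.primeFactors, (((p : ℝ) ^ k - 1) ^ 2)⁻¹

/-- The diffraction intensity `Z_k(ε)` of the `k`-free integers
(Baake–Moody–Pleasants formula). -/
noncomputable def Zk (k : ℕ) (ε : ℝ) : ℝ :=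
  ∑' q : ℕ, muk (k + 1) q *
    ((((Finset.Icc 1 ⌊(q : ℝ) * ε⌋₊).filter fun m => Nat.gcd m q = 1)).card : ℝ) * Pk k q

/-- The discretised quantity `Z̃_k(N)`. -/
noncomputable def Ztilde (k N : ℕ) : ℝ :=
  ∑' q : ℕ, muk (k + 1) q * Pk k q *
    ((((Finset.Icc 1 (q / N)).filter fun m => Nat.gcd m q = 1)).card : ℝ)

/-- The quantity `z_k(c)`. -/
noncomputable def zk (k c : ℕ) : ℝ :=
  ∑' r : ℕ, ∑' d : ℕ,
    (if c ≤ r then (1 : ℝ) else 0) * (ArithmeticFunction.moebius d : ℝ) *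
      muk (k + 1) (d * r) * Pk k (d * r)

/-- `ξ_k := ∏_p (1 - (p^k-1)^{-2})`. -/
noncomputable def xi (k : ℕ) : ℝ :=
  ∏' p : Nat.Primes, (1 - ((((p : ℕ) : ℝ) ^ k - 1) ^ 2)⁻¹)

/-- `γ_k := ζ(2)⁻¹ ∏_p (1 + 2/((p+1)(p^k-2)))`. -/
noncomputable def gam (k : ℕ) : ℝ :=
  (zetaR 2)⁻¹ * ∏' p : Nat.Primes, (1 + 2 / ((((p : ℕ) : ℝ) + 1) * (((p : ℕ) : ℝ) ^ k - 2)))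

/-- The leading constant `c_k`. -/
noncomputable def ck (k : ℕ) : ℝ :=
  (2 * (k : ℝ) / (2 * (k : ℝ) - 1)) * (zetaR (2 - 1 / (k : ℝ)) / zetaR 2) * (zetaR (k : ℝ)) ^ 2 *
    ∏' p : Nat.Primes, (1 - 2 * ((p : ℕ) : ℝ) / ((((p : ℕ) : ℝ) + 1) * ((p : ℕ) : ℝ) ^ k))

open ArithmeticFunction

section Aux

variable {k : ℕ}

lemma muk_zero (m : ℕ) : muk m 0 = 0 := by
  rw [muk, if_neg]
  intro h
  exact h 2 Nat.prime_two (dvd_zero _)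

lemma muk_nonneg (m q : ℕ) : 0 ≤ muk m q := by
  rw [muk]; split <;> norm_num

lemma muk_le_one (m q : ℕ) : muk m q ≤ 1 := by
  rw [muk]; split <;> norm_num

lemma four_le_pow (hk : 2 ≤ k) {p : ℕ} (hp : 2 ≤ p) : (4 : ℝ) ≤ (p : ℝ) ^ k := by
  have hp2 : (2 : ℝ) ≤ (p : ℝ) := by exact_mod_cast hp
  calc (4 : ℝ) = 2 ^ 2 := by norm_num
    _ ≤ (2 : ℝ) ^ k := by
        apply pow_le_pow_right₀ (by norm_num) hk
    _ ≤ (p : ℝ) ^ k := by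
        apply pow_le_pow_left₀ (by norm_num) hp2

lemma factor_pos (hk : 2 ≤ k) {p : ℕ} (hp : 2 ≤ p) : 0 < ((p : ℝ) ^ k - 1) ^ 2 := by
  have := four_le_pow hk hp
  nlinarith

lemma sq_le_factor (hk : 2 ≤ k) {p : ℕ} (hp : 2 ≤ p) :
    ((p : ℝ)) ^ 2 ≤ ((p : ℝ) ^ k - 1) ^ 2 := by
  have hp2 : (2 : ℝ) ≤ (p : ℝ) := by exact_mod_cast hp
  have h1 : (p : ℝ) ^ 2 ≤ (p : ℝ) ^ k := pow_le_pow_right₀ (by linarith) hk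
  have h3 : (p : ℝ) ≤ (p : ℝ) ^ k - 1 := by nlinarith
  exact pow_le_pow_left₀ (by linarith) h3 2

lemma factor_inv_le_one (hk : 2 ≤ k) {p : ℕ} (hp : 2 ≤ p) :
    (((p : ℝ) ^ k - 1) ^ 2)⁻¹ ≤ 1 := by
  rw [inv_le_one_iff₀]
  right
  have := four_le_pow hk hp
  nlinarith

lemma Pk_nonneg (k q : ℕ) : 0 ≤ Pk k q := by
  apply Finset.prod_nonneg
  intro p _
  positivity

lemma Pk_le_one (hk : 2 ≤ k) (q : ℕ) : Pk k q ≤ 1 := by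
  apply Finset.prod_le_one
  · intro p _; positivity
  · intro p hp
    exact factor_inv_le_one hk (Nat.prime_of_mem_primeFactors hp).two_le

lemma Pk_le_of_dvd (hk : 2 ≤ k) {d m : ℕ} (hm : m ≠ 0) (hdm : d ∣ m) :
    Pk k m ≤ Pk k d := by
  have hsub : d.primeFactors ⊆ m.primeFactors := Nat.primeFactors_mono hdm hm
  rw [Pk, ← Finset.prod_sdiff hsub]
  have h1 : ∏ p ∈ m.primeFactors \ d.primeFactors, (((p : ℝ) ^ k - 1) ^ 2)⁻¹ ≤ 1 := by
    apply Finset.prod_le_one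
    · intro p _; positivity
    · intro p hp
      exact factor_inv_le_one hk
        (Nat.prime_of_mem_primeFactors (Finset.mem_sdiff.mp hp).1).two_le
  exact mul_le_of_le_one_left (Pk_nonneg k d) h1

lemma Pk_le_inv_sq (hk : 2 ≤ k) {d : ℕ} (hd : Squarefree d) :
    Pk k d ≤ (((d : ℝ)) ^ 2)⁻¹ := by
  have h1 : Pk k d ≤ ∏ p ∈ d.primeFactors, (((p : ℝ)) ^ 2)⁻¹ := by
    apply Finset.prod_le_prod
    · intro p _; positivity
    · intro p hp
      have hp2 := (Nat.prime_of_mem_primeFactors hp).two_le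
      have hpos : (0 : ℝ) < (p : ℝ) ^ 2 := by positivity
      exact inv_anti₀ hpos (sq_le_factor hk hp2)
  refine h1.trans_eq ?_
  rw [Finset.prod_inv_distrib, Finset.prod_pow, ← Nat.cast_prod,
    Nat.prod_primeFactors_of_squarefree hd]

lemma summable_inv_sq : Summable (fun d : ℕ => (((d : ℝ)) ^ 2)⁻¹) := by
  simpa [one_div] using summable_one_div_nat_pow.mpr (le_refl 2)

lemma summable_of_le_inv_sq {f : ℕ → ℝ} (h : ∀ d, |f d| ≤ (((d : ℝ)) ^ 2)⁻¹) :
    Summable f :=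
  (summable_abs_iff).mp (Summable.of_nonneg_of_le (fun _ => abs_nonneg _) h summable_inv_sq)

end Aux

section Core

variable {k : ℕ}

/-- inner sum -/
noncomputable def Sk (k r : ℕ) : ℝ :=
  ∑' d : ℕ, (moebius d : ℝ) * muk (k + 1) (d * r) * Pk k (d * r)

/-- coprime-restricted Möbius sum -/
noncomputable def Gk (k t : ℕ) : ℝ :=
  ∑' d : ℕ, (moebius d : ℝ) * (if Nat.Coprime d t then (1 : ℝ) else 0) * Pk k d

lemma abs_f_le (hk : 2 ≤ k) (r d : ℕ) :
    |(moebius d : ℝ) * muk (k + 1) (d * r) * Pk k (d * r)| ≤ (((d : ℝ)) ^ 2)⁻¹ := by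
  by_cases hd : Squarefree d
  · by_cases hr : r = 0
    · subst hr
      simp [muk_zero]
    · have hd0 : d ≠ 0 := hd.ne_zero
      have hdr : d * r ≠ 0 := mul_ne_zero hd0 hr
      rw [abs_mul, abs_mul]
      have h1 : |(moebius d : ℝ)| ≤ 1 := by
        rw [← Int.cast_abs]
        exact_mod_cast abs_moebius_le_one
      have h2 : |muk (k + 1) (d * r)| ≤ 1 := by
        rw [abs_of_nonneg (muk_nonneg _ _)]; exact muk_le_one _ _
      have h3 : |Pk k (d * r)| ≤ (((d : ℝ)) ^ 2)⁻¹ := by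
        rw [abs_of_nonneg (Pk_nonneg _ _)]
        exact (Pk_le_of_dvd hk hdr (dvd_mul_right d r)).trans (Pk_le_inv_sq hk hd)
      calc |(moebius d : ℝ)| * |muk (k + 1) (d * r)| * |Pk k (d * r)|
          ≤ 1 * 1 * (((d : ℝ)) ^ 2)⁻¹ := by
            apply mul_le_mul (mul_le_mul h1 h2 (abs_nonneg _) (by norm_num)) h3
              (abs_nonneg _) (by norm_num)
        _ = (((d : ℝ)) ^ 2)⁻¹ := by ring
  · simp [moebius_eq_zero_of_not_squarefree hd]

lemma abs_g_le (hk : 2 ≤ k) (t d : ℕ) :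
    |(moebius d : ℝ) * (if Nat.Coprime d t then (1 : ℝ) else 0) * Pk k d| ≤
      (((d : ℝ)) ^ 2)⁻¹ := by
  by_cases hd : Squarefree d
  · rw [abs_mul, abs_mul]
    have h1 : |(moebius d : ℝ)| ≤ 1 := by
      rw [← Int.cast_abs]
      exact_mod_cast abs_moebius_le_one
    have h2 : |(if Nat.Coprime d t then (1 : ℝ) else 0)| ≤ 1 := by
      split <;> norm_num
    have h3 : |Pk k d| ≤ (((d : ℝ)) ^ 2)⁻¹ := by
      rw [abs_of_nonneg (Pk_nonneg _ _)]
      exact Pk_le_inv_sq hk hd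
    calc |(moebius d : ℝ)| * |(if Nat.Coprime d t then (1 : ℝ) else 0)| * |Pk k d|
        ≤ 1 * 1 * (((d : ℝ)) ^ 2)⁻¹ := by
          apply mul_le_mul (mul_le_mul h1 h2 (abs_nonneg _) (by norm_num)) h3
            (abs_nonneg _) (by norm_num)
      _ = (((d : ℝ)) ^ 2)⁻¹ := by ring
  · simp [moebius_eq_zero_of_not_squarefree hd]

lemma summable_f (hk : 2 ≤ k) (r : ℕ) :
    Summable (fun d : ℕ => (moebius d : ℝ) * muk (k + 1) (d * r) * Pk k (d * r)) :=
  summable_of_le_inv_sq (abs_f_le hk r)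

lemma summable_g (hk : 2 ≤ k) (t : ℕ) :
    Summable (fun d : ℕ =>
      (moebius d : ℝ) * (if Nat.Coprime d t then (1 : ℝ) else 0) * Pk k d) :=
  summable_of_le_inv_sq (abs_g_le hk t)

lemma zk_eq_tsum_Sk (k c : ℕ) :
    zk k c = ∑' r : ℕ, (if c ≤ r then (1 : ℝ) else 0) * Sk k r := by
  rw [zk]
  apply tsum_congr
  intro r
  rw [Sk, ← tsum_mul_left]
  apply tsum_congr
  intro d
  ring

lemma Sk_zero : Sk k 0 = 0 := by
  rw [Sk]
  convert tsum_zero with d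
  rw [mul_zero, muk_zero, mul_zero, zero_mul]

lemma Sk_eq_zero_of_high {r p : ℕ} (hp : p.Prime) (hdvd : p ^ (k + 1) ∣ r) :
    Sk k r = 0 := by
  rw [Sk]
  convert tsum_zero with d
  have : muk (k + 1) (d * r) = 0 := by
    rw [muk, if_neg]
    intro h
    exact h p hp (hdvd.trans (dvd_mul_left r d))
  rw [this, mul_zero, zero_mul]

end Core

section Cancel

variable {k : ℕ}

lemma Sk_eq_zero_of_mid (hk : 2 ≤ k) {r p : ℕ} (hr : r ≠ 0) (hp : p.Prime)
    (hpr : p ∣ r) (hpk : ¬ p ^ k ∣ r) : Sk k r = 0 := by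
  set f : ℕ → ℝ :=
    fun d => (moebius d : ℝ) * muk (k + 1) (d * r) * Pk k (d * r) with hf
  have key : ∀ e : ℕ, f (p * e) = -(if p ∣ e then 0 else f e) := by
    intro e
    by_cases he0 : e = 0
    · subst he0
      simp [hf, muk_zero]
    by_cases hpe : p ∣ e
    · rw [if_pos hpe]
      have hnsq : ¬ Squarefree (p * e) := by
        intro h
        exact (Nat.squarefree_iff_prime_squarefree.mp h p hp)
          (mul_dvd_mul_left p hpe)
      simp [hf, moebius_eq_zero_of_not_squarefree hnsq]
    · rw [if_neg hpe]
      have hcop : Nat.Coprime p e := (hp.coprime_iff_not_dvd).mpr hpe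
      have h1 : (moebius (p * e) : ℤ) = -moebius e := by
        rw [isMultiplicative_moebius.map_mul_of_coprime hcop,
          moebius_apply_prime hp]
        ring
      have her : e * r ≠ 0 := mul_ne_zero he0 hr
      have h2 : muk (k + 1) (p * e * r) = muk (k + 1) (e * r) := by
        rw [mul_assoc, muk, muk]
        refine if_congr ?_ rfl rfl
        constructor
        · intro h q hq hdvd
          exact h q hq (hdvd.trans (dvd_mul_left (e * r) p))
        · intro h q hq hdvd
          by_cases hqp : q = p
          · subst hqp
            rw [pow_succ'] at hdvd
            have h3 : q ^ k ∣ e * r := (mul_dvd_mul_iff_left hp.pos.ne').mp hdvd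
            have h4 : q ^ k ∣ r := (Nat.Coprime.pow_left k hcop).dvd_of_dvd_mul_left h3
            exact hpk h4
          · have hqcop : Nat.Coprime (q ^ (k + 1)) p :=
              Nat.Coprime.pow_left _ ((Nat.coprime_primes hq hp).mpr hqp)
            exact h q hq (hqcop.dvd_of_dvd_mul_left hdvd)
      have h3 : Pk k (p * e * r) = Pk k (e * r) := by
        rw [Pk, Pk, mul_assoc, Nat.primeFactors_mul hp.pos.ne' her,
          hp.primeFactors]
        congr 1
        rw [Finset.union_eq_right]
        intro q hq
        rw [Finset.mem_singleton] at hq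
        subst hq
        exact Nat.mem_primeFactors.mpr ⟨hp, hpr.mul_left e, her⟩
      rw [hf]
      simp only
      rw [h2, h3]
      push_cast [h1]
      ring
  have hsum : Summable f := summable_f hk r
  set f1 : ℕ → ℝ := fun d => if p ∣ d then 0 else f d with hf1
  set f2 : ℕ → ℝ := fun d => if p ∣ d then f d else 0 with hf2
  have habs1 : ∀ d, |f1 d| ≤ (((d : ℝ)) ^ 2)⁻¹ := by
    intro d
    rw [hf1]
    simp only
    split
    · simp
    · exact abs_f_le hk r d
  have habs2 : ∀ d, |f2 d| ≤ (((d : ℝ)) ^ 2)⁻¹ := by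
    intro d
    rw [hf2]
    simp only
    split
    · exact abs_f_le hk r d
    · simp
  have hsum1 : Summable f1 := summable_of_le_inv_sq habs1
  have hsum2 : Summable f2 := summable_of_le_inv_sq habs2
  have hsplit : Sk k r = ∑' d, f1 d + ∑' d, f2 d := by
    rw [Sk, ← Summable.tsum_add hsum1 hsum2]
    apply tsum_congr
    intro d
    rw [hf1, hf2]
    simp only
    split <;> simp [hf]
  have hinj : Function.Injective (fun e : ℕ => p * e) := fun a b h =>
    Nat.eq_of_mul_eq_mul_left hp.pos h
  have hrange : Function.support f2 ⊆ Set.range (fun e : ℕ => p * e) := by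
    intro d hd
    rw [Function.mem_support, hf2] at hd
    simp only at hd
    by_cases h : p ∣ d
    · obtain ⟨e, rfl⟩ := h
      exact ⟨e, rfl⟩
    · rw [if_neg h] at hd
      exact absurd rfl hd
  have h2 : ∑' d, f2 d = -∑' d, f1 d := by
    rw [← hinj.tsum_eq hrange]
    rw [← tsum_neg]
    apply tsum_congr
    intro e
    have : f2 (p * e) = f (p * e) := by
      rw [hf2]
      simp only
      rw [if_pos (dvd_mul_right p e)]
    rw [this, key e, hf1]
  rw [hsplit, h2, add_neg_cancel]

end Cancel

section Euler

variable {k : ℕ}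

lemma hasProd_Gk (hk : 2 ≤ k) (t : ℕ) :
    HasProd
      (fun p : Nat.Primes =>
        if (p : ℕ) ∣ t then (1 : ℝ) else 1 - ((((p : ℕ) : ℝ) ^ k - 1) ^ 2)⁻¹)
      (Gk k t) := by
  set g : ℕ → ℝ :=
    fun d => (moebius d : ℝ) * (if Nat.Coprime d t then (1 : ℝ) else 0) * Pk k d with hg
  have hg1 : g 1 = 1 := by
    simp [hg, Pk, Nat.coprime_one_left]
  have hg0 : g 0 = 0 := by
    simp [hg]
  have hmul : ∀ {m n : ℕ}, Nat.Coprime m n → g (m * n) = g m * g n := by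
    intro m n hmn
    by_cases hm : Squarefree m
    · by_cases hn : Squarefree n
      · have hm0 : m ≠ 0 := hm.ne_zero
        have hn0 : n ≠ 0 := hn.ne_zero
        have e1 : (moebius (m * n) : ℝ) = (moebius m : ℝ) * (moebius n : ℝ) := by
          rw [← Int.cast_mul, isMultiplicative_moebius.map_mul_of_coprime hmn]
        have e2 : (if Nat.Coprime (m * n) t then (1 : ℝ) else 0) =
            (if Nat.Coprime m t then (1 : ℝ) else 0) *
              (if Nat.Coprime n t then (1 : ℝ) else 0) := by
          rcases em (Nat.Coprime m t) with h1 | h1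
          · rcases em (Nat.Coprime n t) with h2 | h2
            · rw [if_pos h1, if_pos h2,
                if_pos (Nat.coprime_mul_iff_left.mpr ⟨h1, h2⟩), mul_one]
            · rw [if_neg h2, if_neg
                (fun hc => h2 (Nat.coprime_mul_iff_left.mp hc).2), mul_zero]
          · rw [if_neg h1, if_neg
              (fun hc => h1 (Nat.coprime_mul_iff_left.mp hc).1), zero_mul]
        have e3 : Pk k (m * n) = Pk k m * Pk k n := by
          rw [Pk, Pk, Pk, Nat.Coprime.primeFactors_mul hmn,
            Finset.prod_union hmn.disjoint_primeFactors]
        rw [hg]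
        simp only
        rw [e1, e2, e3]
        ring
      · have : ¬ Squarefree (m * n) := fun h => hn (h.squarefree_of_dvd (dvd_mul_left n m))
        simp [hg, moebius_eq_zero_of_not_squarefree this,
          moebius_eq_zero_of_not_squarefree hn]
    · have : ¬ Squarefree (m * n) := fun h => hm (h.squarefree_of_dvd (dvd_mul_right m n))
      simp [hg, moebius_eq_zero_of_not_squarefree this,
        moebius_eq_zero_of_not_squarefree hm]
  have hsum : Summable (fun d => ‖g d‖) := by
    apply Summable.of_nonneg_of_le (fun d => norm_nonneg _)
      (fun d => ?_) summable_inv_sq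
    rw [Real.norm_eq_abs]
    exact abs_g_le hk t d
  have h := EulerProduct.eulerProduct_hasProd hg1 hmul hsum hg0
  have hGk : Gk k t = ∑' n, g n := rfl
  rw [← hGk] at h
  convert h using 2 with p
  · rfl
  have hp := p.2
  have htsum : ∑' e : ℕ, g ((p : ℕ) ^ e) = g 1 + g (p : ℕ) := by
    rw [tsum_eq_sum (s := {0, 1}) ?_]
    · rw [Finset.sum_pair (by norm_num)]
      rw [pow_zero, pow_one]
    · intro e he
      simp only [Finset.mem_insert, Finset.mem_singleton] at he
      push_neg at he
      rw [hg]
      simp only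
      rw [moebius_apply_prime_pow hp he.1, if_neg he.2]
      simp
  rw [htsum, hg1, hg]
  simp only
  rw [moebius_apply_prime hp, Pk, hp.primeFactors, Finset.prod_singleton]
  by_cases hdvd : (p : ℕ) ∣ t
  · rw [if_pos hdvd, if_neg (fun hc => (hp.coprime_iff_not_dvd.mp hc) hdvd)]
    push_cast
    ring
  · rw [if_neg hdvd, if_pos (hp.coprime_iff_not_dvd.mpr hdvd)]
    push_cast
    ring

lemma xi_eq_Gk_mul (hk : 2 ≤ k) {t : ℕ} (ht : t ≠ 0) :
    xi k = Gk k t * ∏ p ∈ t.primeFactors, (1 - (((p : ℝ) ^ k - 1) ^ 2)⁻¹) := by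
  set A : Nat.Primes → ℝ :=
    fun p => 1 - ((((p : ℕ) : ℝ) ^ k - 1) ^ 2)⁻¹ with hA
  set B : Nat.Primes → ℝ :=
    fun p => if (p : ℕ) ∣ t then (1 : ℝ) else A p with hB
  set C : Nat.Primes → ℝ :=
    fun p => if (p : ℕ) ∣ t then A p else 1 with hC
  set s : Finset Nat.Primes :=
    t.primeFactors.attach.image
      (fun q => (⟨q.1, Nat.prime_of_mem_primeFactors q.2⟩ : Nat.Primes)) with hs
  have hBprod : HasProd B (Gk k t) := hasProd_Gk hk t
  have hCprod : HasProd C (∏ p ∈ s, C p) := by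
    apply hasProd_prod_of_ne_finset_one
    intro q hq
    rw [hC]
    simp only
    rw [if_neg]
    intro hdvd
    apply hq
    erw [hs, Finset.mem_image]
    exact ⟨⟨q.1, Nat.mem_primeFactors.mpr ⟨q.2, hdvd, ht⟩⟩, Finset.mem_attach _ _,
      Subtype.ext rfl⟩
  have hBC : HasProd A (Gk k t * ∏ p ∈ s, C p) := by
    have := hBprod.mul hCprod
    convert this using 1
    funext p
    rw [hA, hB, hC]
    simp only
    split <;> ring
  have hxi : xi k = Gk k t * ∏ p ∈ s, C p := hBC.tprod_eq
  rw [hxi]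
  congr 1
  erw [hs, Finset.prod_image ?_]
  · rw [← Finset.prod_attach t.primeFactors
      (fun p => 1 - (((p : ℝ) ^ k - 1) ^ 2)⁻¹)]
    apply Finset.prod_congr rfl
    intro q _
    rw [hC]
    simp only
    rw [if_pos (Nat.dvd_of_mem_primeFactors q.2)]
  · intro a _ b _ h
    exact Subtype.ext (congrArg (fun x : Nat.Primes => (x : ℕ)) h)

end Euler

section Eval

variable {k : ℕ}

lemma Sk_pow (hk : 2 ≤ k) {t : ℕ} (ht : Squarefree t) :
    Sk k (t ^ k) = Pk k (t ^ k) * Gk k t := by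
  have ht0 : t ≠ 0 := ht.ne_zero
  rw [Sk, Gk, ← tsum_mul_left]
  apply tsum_congr
  intro d
  by_cases hd : Squarefree d
  · have hd0 : d ≠ 0 := hd.ne_zero
    have htk0 : t ^ k ≠ 0 := pow_ne_zero _ ht0
    by_cases hdt : Nat.Coprime d t
    · have hmuk : muk (k + 1) (d * t ^ k) = 1 := by
        rw [muk, if_pos]
        intro q hq hdvd
        rw [hq.pow_dvd_iff_le_factorization (mul_ne_zero hd0 htk0)] at hdvd
        rw [Nat.factorization_mul hd0 htk0, Nat.factorization_pow] at hdvd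
        simp only [Finsupp.coe_add, Pi.add_apply, Finsupp.coe_smul, Pi.smul_apply,
          smul_eq_mul] at hdvd
        have h1 : d.factorization q ≤ 1 := hd.natFactorization_le_one q
        have h2 : t.factorization q ≤ 1 := ht.natFactorization_le_one q
        by_cases hqt : q ∣ t
        · have hqd : ¬ q ∣ d := by
            intro hqd
            have hdvd1 : q ∣ Nat.gcd d t := Nat.dvd_gcd hqd hqt
            rw [hdt] at hdvd1
            exact hq.one_lt.ne' (Nat.dvd_one.mp hdvd1)
          rw [Nat.factorization_eq_zero_of_not_dvd hqd] at hdvd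
          have h3 : k * t.factorization q ≤ k * 1 := Nat.mul_le_mul_left k h2
          omega
        · rw [Nat.factorization_eq_zero_of_not_dvd hqt] at hdvd
          omega
      have hcop2 : Nat.Coprime d (t ^ k) := hdt.pow_right k
      have hPk : Pk k (d * t ^ k) = Pk k d * Pk k (t ^ k) := by
        rw [Pk, Pk, Pk, Nat.Coprime.primeFactors_mul hcop2,
          Finset.prod_union hcop2.disjoint_primeFactors]
      rw [hmuk, hPk, if_pos hdt]
      ring
    · obtain ⟨q, hq, hqd, hqt⟩ := Nat.Prime.not_coprime_iff_dvd.mp hdt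
      have hmuk : muk (k + 1) (d * t ^ k) = 0 := by
        rw [muk, if_neg]
        intro h
        apply h q hq
        rw [pow_succ, mul_comm d (t ^ k)]
        exact mul_dvd_mul (pow_dvd_pow_of_dvd hqt k) hqd
      rw [hmuk, if_neg hdt]
      ring
  · simp [moebius_eq_zero_of_not_squarefree hd]

lemma eq_pow_of_good {r : ℕ} (hr : r ≠ 0)
    (h1 : ∀ p : ℕ, p.Prime → ¬ p ^ (k + 1) ∣ r)
    (h2 : ∀ p : ℕ, p.Prime → p ∣ r → p ^ k ∣ r) :
    r = (∏ p ∈ r.primeFactors, p) ^ k := by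
  conv_lhs => rw [← Nat.factorization_prod_pow_eq_self hr]
  rw [Finsupp.prod, Nat.support_factorization, ← Finset.prod_pow]
  apply Finset.prod_congr rfl
  intro p hp
  have hpp := Nat.prime_of_mem_primeFactors hp
  have hpd := Nat.dvd_of_mem_primeFactors hp
  have hle : r.factorization p ≤ k := by
    by_contra hlt
    exact h1 p hpp ((hpp.pow_dvd_iff_le_factorization hr).mpr (by omega))
  have hge : k ≤ r.factorization p :=
    (hpp.pow_dvd_iff_le_factorization hr).mp (h2 p hpp hpd)
  rw [le_antisymm hle hge]

end Eval

section Final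

variable {k : ℕ}

lemma Pk_pow_eq (hk : 2 ≤ k) {t : ℕ} (ht : Squarefree t) :
    Pk k (t ^ k) =
      (∏ p ∈ t.primeFactors, (1 - (((p : ℝ) ^ k - 1) ^ 2)⁻¹)) *
        ((1 : ℝ) / (t : ℝ) ^ (2 * k) *
          ∏ p ∈ t.primeFactors, (1 - 2 / (p : ℝ) ^ k)⁻¹) := by
  have hk0 : k ≠ 0 := by omega
  rw [Pk, Nat.primeFactors_pow t hk0]
  have h1 : (1 : ℝ) / (t : ℝ) ^ (2 * k) =
      ∏ p ∈ t.primeFactors, (((p : ℝ)) ^ (2 * k))⁻¹ := by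
    rw [Finset.prod_inv_distrib, Finset.prod_pow, ← Nat.cast_prod,
      Nat.prod_primeFactors_of_squarefree ht, one_div]
  rw [h1, ← Finset.prod_mul_distrib, ← Finset.prod_mul_distrib]
  apply Finset.prod_congr rfl
  intro p hp
  have hp2 := (Nat.prime_of_mem_primeFactors hp).two_le
  have hx : (4 : ℝ) ≤ (p : ℝ) ^ k := four_le_pow hk hp2
  have e1 : ((p : ℝ)) ^ (2 * k) = ((p : ℝ) ^ k) ^ 2 := by
    rw [pow_mul']
  rw [e1]
  have h0 : (p : ℝ) ^ k ≠ 0 := by positivity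
  have hne1 : (p : ℝ) ^ k - 1 ≠ 0 := by intro h; nlinarith
  have hne2 : (p : ℝ) ^ k - 2 ≠ 0 := by intro h; nlinarith
  have hne3 : 1 - 2 / (p : ℝ) ^ k ≠ 0 := by
    have : 1 - 2 / (p : ℝ) ^ k = ((p : ℝ) ^ k - 2) / (p : ℝ) ^ k := by
      field_simp
    rw [this]
    exact div_ne_zero hne2 h0
  field_simp
  ring

lemma ind_eq {c : ℕ} (hk0 : k ≠ 0) (t : ℕ) :
    (if c ≤ t ^ k then (1 : ℝ) else 0) =
      (if (c : ℝ) ^ (((k : ℝ))⁻¹) ≤ (t : ℝ) then (1 : ℝ) else 0) := by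
  refine if_congr ?_ rfl rfl
  have hkpos : (0 : ℝ) < (k : ℝ) := by
    exact_mod_cast Nat.pos_of_ne_zero hk0
  rw [Real.rpow_inv_le_iff_of_pos (by positivity) (by positivity) hkpos,
    Real.rpow_natCast]
  exact_mod_cast Iff.rfl

lemma term_eq (hk : 2 ≤ k) {c : ℕ} (hc : 1 ≤ c) (t : ℕ) :
    (if c ≤ t ^ k then (1 : ℝ) else 0) * Sk k (t ^ k) =
      xi k * ((if (c : ℝ) ^ (((k : ℝ))⁻¹) ≤ (t : ℝ) then (1 : ℝ) else 0) *
        |(moebius t : ℝ)| / (t : ℝ) ^ (2 * k) *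
        ∏ p ∈ t.primeFactors, (1 - 2 / (p : ℝ) ^ k)⁻¹) := by
  have hk0 : k ≠ 0 := by omega
  by_cases ht : Squarefree t
  · have habs : |(moebius t : ℝ)| = 1 := by
      rw [← Int.cast_abs, abs_moebius_eq_one_of_squarefree ht]
      norm_num
    rw [Sk_pow hk ht, xi_eq_Gk_mul hk ht.ne_zero, Pk_pow_eq hk ht,
      ind_eq hk0 t, habs]
    ring
  · have hmu : (moebius t : ℝ) = 0 := by
      rw [moebius_eq_zero_of_not_squarefree ht]
      norm_num
    have hLHS : Sk k (t ^ k) = 0 := by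
      by_cases ht0 : t = 0
      · subst ht0
        rw [zero_pow hk0, Sk_zero]
      · rw [Nat.squarefree_iff_prime_squarefree] at ht
        push_neg at ht
        obtain ⟨p, hp, hpd⟩ := ht
        have hp' : Nat.Prime p := hp
        have h2 : p ^ 2 ∣ t := by rwa [pow_two]
        have h3 : p ^ (k + 1) ∣ t ^ k := by
          calc p ^ (k + 1) ∣ p ^ (2 * k) := pow_dvd_pow p (by omega)
            _ = (p ^ 2) ^ k := by rw [pow_mul]
            _ ∣ t ^ k := pow_dvd_pow_of_dvd h2 k
        exact Sk_eq_zero_of_high hp' h3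
    rw [hLHS, hmu]
    simp

end Final

theorem statement5' (k c : ℕ) (hk : 2 ≤ k) (hc : 1 ≤ c) :
    zk k c = xi k * ∑' t : ℕ,
      (if (c : ℝ) ^ (((k : ℝ))⁻¹) ≤ (t : ℝ) then (1 : ℝ) else 0) *
        |(ArithmeticFunction.moebius t : ℝ)| / (t : ℝ) ^ (2 * k) *
        ∏ p ∈ t.primeFactors, (1 - 2 / (p : ℝ) ^ k)⁻¹ := by
  have hk0 : k ≠ 0 := by omega
  rw [zk_eq_tsum_Sk]
  have hinj : Function.Injective (fun t : ℕ => t ^ k) :=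
    Nat.pow_left_injective hk0
  have hrange : Function.support
      (fun r : ℕ => (if c ≤ r then (1 : ℝ) else 0) * Sk k r) ⊆
      Set.range (fun t : ℕ => t ^ k) := by
    intro r hr
    rw [Function.mem_support] at hr
    by_cases hr0 : r = 0
    · exact ⟨0, by simp [hr0, zero_pow hk0]⟩
    by_cases hhigh : ∃ p : ℕ, p.Prime ∧ p ^ (k + 1) ∣ r
    · obtain ⟨p, hp, hpd⟩ := hhigh
      exact absurd (by rw [Sk_eq_zero_of_high hp hpd, mul_zero]) hr
    by_cases hmid : ∃ p : ℕ, p.Prime ∧ p ∣ r ∧ ¬ p ^ k ∣ r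
    · obtain ⟨p, hp, hpd, hpk'⟩ := hmid
      exact absurd (by rw [Sk_eq_zero_of_mid hk hr0 hp hpd hpk', mul_zero]) hr
    push_neg at hhigh hmid
    exact ⟨∏ p ∈ r.primeFactors, p, (eq_pow_of_good hr0 hhigh hmid).symm⟩
  rw [← hinj.tsum_eq hrange]
  rw [← tsum_mul_left]
  exact tsum_congr (term_eq hk hc)

/-- factorisation of `z_k(c)` as `ξ_k` times a tail of a convergent series. -/
theorem statement5 (k c : ℕ) (hk : 2 ≤ k) (hc : 1 ≤ c) :
    zk k c = xi k * ∑' t : ℕ,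
      (if (c : ℝ) ^ (((k : ℝ))⁻¹) ≤ (t : ℝ) then (1 : ℝ) else 0) *
        |(ArithmeticFunction.moebius t : ℝ)| / (t : ℝ) ^ (2 * k) *
        ∏ p ∈ t.primeFactors, (1 - 2 / (p : ℝ) ^ k)⁻¹ := by
  exact statement5' k c hk hc
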